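/- arXiv:1808.02435 — 6 statements merged into one kernel-verified Lean document; each statement's English description precedes it below -/
import Mathlib

section
/- Let (v̄, w̄⁺, w̄⁻, b̄, ξ̄) be LP-feasible with objective value z = Obj(v̄, w̄⁺, w̄⁻, b̄, ξ̄), and suppose every LP-feasible tuple has objective value at least z (i.e., (v̄, w̄⁺, w̄⁻, b̄, ξ̄) is optimal for LP-FS-SVM). Let ᾱ : Fin m → ℝ satisfy ᾱ i ≥ 0 for all i and L(t; ᾱ) ≥ z for every relaxed-feasible tuple t (i.e., ᾱ is an optimal vector of dual multipliers for the soft-margin constraints (1)). Let j0 : Fin n with w̄⁺ j0 + w̄⁻ j0 = 0, and let w̃ > 0 satisfy (∑ j, v̄ j) + w̃ / (-(l j0)) ≤ B. Then every LP-feasible tuple (v, w⁺, w⁻, b, ξ) with w⁻ j0 = w̃ satisfies Obj(v, w⁺, w⁻, b, ξ) ≥ z + w̃ * (1 + ∑ i, ᾱ i * y i * x i j0). -/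
open Finset

/-- Objective of FS-SVM: sum of hyperplane coefficient magnitudes plus penalized deviations. -/
noncomputable def Obj {m n : ℕ} (C : ℝ) (v wp wm : Fin n → ℝ) (b : ℝ) (ξ : Fin m → ℝ) : ℝ :=
  (∑ j, (wp j + wm j)) + C * ∑ i, ξ i

/-- Feasibility for the LP relaxation LP-FS-SVM. -/
def LPFeasible {m n : ℕ} (x : Fin m → Fin n → ℝ) (y : Fin m → ℝ) (B : ℝ)
    (u l : Fin n → ℝ) (v wp wm : Fin n → ℝ) (b : ℝ) (ξ : Fin m → ℝ) : Prop :=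
  (∀ i, y i * ((∑ j, (wp j - wm j) * x i j) + b) ≥ 1 - ξ i) ∧
  (∑ j, v j) ≤ B ∧
  (∀ j, 0 ≤ wp j ∧ wp j ≤ u j * v j ∧ 0 ≤ wm j ∧ wm j ≤ -(l j) * v j) ∧
  (∀ i, 0 ≤ ξ i) ∧
  (∀ j, 0 ≤ v j ∧ v j ≤ 1)

/-- Feasibility for the mixed-integer problem FS-SVM. -/
def FSFeasible {m n : ℕ} (x : Fin m → Fin n → ℝ) (y : Fin m → ℝ) (B : ℝ)
    (u l : Fin n → ℝ) (v wp wm : Fin n → ℝ) (b : ℝ) (ξ : Fin m → ℝ) : Prop :=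
  (∀ i, y i * ((∑ j, (wp j - wm j) * x i j) + b) ≥ 1 - ξ i) ∧
  (∑ j, v j) ≤ B ∧
  (∀ j, 0 ≤ wp j ∧ wp j ≤ u j * v j ∧ 0 ≤ wm j ∧ wm j ≤ -(l j) * v j) ∧
  (∀ i, 0 ≤ ξ i) ∧
  (∀ j, v j = 0 ∨ v j = 1)

/-- Relaxed feasibility: all LP constraints except the soft-margin constraints (1). -/
def RelaxedFeasible {m n : ℕ} (B : ℝ) (u l : Fin n → ℝ)
    (v wp wm : Fin n → ℝ) (ξ : Fin m → ℝ) : Prop :=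
  (∑ j, v j) ≤ B ∧
  (∀ j, 0 ≤ wp j ∧ wp j ≤ u j * v j ∧ 0 ≤ wm j ∧ wm j ≤ -(l j) * v j) ∧
  (∀ i, 0 ≤ ξ i) ∧
  (∀ j, 0 ≤ v j ∧ v j ≤ 1)

/-- Lagrangian obtained by dualizing the soft-margin constraints (1). -/
noncomputable def Lag {m n : ℕ} (x : Fin m → Fin n → ℝ) (y : Fin m → ℝ) (C : ℝ)
    (v wp wm : Fin n → ℝ) (b : ℝ) (ξ : Fin m → ℝ) (α : Fin m → ℝ) : ℝ :=
  Obj C v wp wm b ξ +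
    ∑ i, α i * (1 - ξ i - y i * ((∑ j, (wp j - wm j) * x i j) + b))

theorem stmt1
    (m n : ℕ) (x : Fin m → Fin n → ℝ) (y : Fin m → ℝ)
    (hy : ∀ i, y i = 1 ∨ y i = -1)
    (C : ℝ) (hC : 0 < C) (B : ℝ) (u l : Fin n → ℝ)
    (hu : ∀ j, 0 < u j) (hl : ∀ j, l j < 0)
    (vb wpb wmb : Fin n → ℝ) (bb : ℝ) (ξb : Fin m → ℝ)
    (hfeas : LPFeasible x y B u l vb wpb wmb bb ξb)
    (z : ℝ) (hz : z = Obj C vb wpb wmb bb ξb)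
    (hopt : ∀ (v wp wm : Fin n → ℝ) (b : ℝ) (ξ : Fin m → ℝ),
      LPFeasible x y B u l v wp wm b ξ → Obj C v wp wm b ξ ≥ z)
    (αb : Fin m → ℝ) (hα : ∀ i, 0 ≤ αb i)
    (hdual : ∀ (v wp wm : Fin n → ℝ) (b : ℝ) (ξ : Fin m → ℝ),
      RelaxedFeasible B u l v wp wm ξ → Lag x y C v wp wm b ξ αb ≥ z)
    (j0 : Fin n) (hj0 : wpb j0 + wmb j0 = 0)
    (wt : ℝ) (hwt : 0 < wt)
    (hbud : (∑ j, vb j) + wt / (-(l j0)) ≤ B) :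
    ∀ (v wp wm : Fin n → ℝ) (b : ℝ) (ξ : Fin m → ℝ),
      LPFeasible x y B u l v wp wm b ξ → wm j0 = wt →
      Obj C v wp wm b ξ ≥ z + wt * (1 + ∑ i, αb i * y i * x i j0) := by
  intro v wp wm b ξ hf hwm
  obtain ⟨h1, h2, h3, h4, h5⟩ := hf
  set wm' : Fin n → ℝ := Function.update wm j0 0 with hwm'
  have hrel : RelaxedFeasible B u l v wp wm' ξ := by
    refine ⟨h2, fun j => ?_, h4, h5⟩
    obtain ⟨a, b2, c, d⟩ := h3 j
    by_cases hj : j = j0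
    · subst hj
      simp only [hwm', Function.update_self]
      exact ⟨a, b2, le_refl 0, mul_nonneg (by linarith [hl j]) (h5 j).1⟩
    · simp only [hwm', Function.update_of_ne hj]
      exact ⟨a, b2, c, d⟩
  have hL := hdual v wp wm' b ξ hrel
  have hsum1 : ∑ j, (wp j + wm' j) = (∑ j, (wp j + wm j)) - wt := by
    have h : ∀ j ∈ Finset.univ, wp j + wm' j
        = (wp j + wm j) - (if j = j0 then wt else 0) := by
      intro j _
      by_cases hj : j = j0
      · subst hj; simp [hwm', hwm]
      · simp [hwm', Function.update_of_ne hj, hj]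
    rw [Finset.sum_congr rfl h, Finset.sum_sub_distrib]
    simp
  have hsum2 : ∀ i, ∑ j, (wp j - wm' j) * x i j
      = (∑ j, (wp j - wm j) * x i j) + wt * x i j0 := by
    intro i
    have h : ∀ j ∈ Finset.univ, (wp j - wm' j) * x i j
        = (wp j - wm j) * x i j + (if j = j0 then wt * x i j0 else 0) := by
      intro j _
      by_cases hj : j = j0
      · subst hj; simp [hwm', hwm]; ring
      · simp [hwm', Function.update_of_ne hj, hj]
    rw [Finset.sum_congr rfl h, Finset.sum_add_distrib]
    simp
  have hnonpos : ∑ i, αb i * (1 - ξ i - y i * ((∑ j, (wp j - wm j) * x i j) + b)) ≤ 0 := by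
    apply Finset.sum_nonpos
    intro i _
    have hi := h1 i
    nlinarith [hα i]
  have hLag : Lag x y C v wp wm' b ξ αb
      = Obj C v wp wm b ξ - wt
        + ∑ i, αb i * (1 - ξ i - y i * ((∑ j, (wp j - wm j) * x i j) + b))
        - wt * ∑ i, αb i * y i * x i j0 := by
    simp only [Lag, Obj, hsum1]
    have h : ∀ i ∈ Finset.univ,
        αb i * (1 - ξ i - y i * ((∑ j, (wp j - wm' j) * x i j) + b))
        = αb i * (1 - ξ i - y i * ((∑ j, (wp j - wm j) * x i j) + b))
          - wt * (αb i * y i * x i j0) := by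
      intro i _
      rw [hsum2 i]; ring
    rw [Finset.sum_congr rfl h, Finset.sum_sub_distrib, ← Finset.mul_sum]
    ring
  rw [hLag] at hL
  linarith
end

section
/- Let (v̄, w̄⁺, w̄⁻, b̄, ξ̄) be LP-feasible with objective value z = Obj(v̄, w̄⁺, w̄⁻, b̄, ξ̄), and suppose every LP-feasible tuple has objective value at least z. Let ᾱ : Fin m → ℝ satisfy ᾱ i ≥ 0 for all i and L(t; ᾱ) ≥ z for every relaxed-feasible tuple t. Let j0 : Fin n with w̄⁺ j0 + w̄⁻ j0 = 0, and assume 1 - ∑ i, ᾱ i * y i * x i j0 > 0. Let UB : ℝ. Then every FS-SVM-feasible tuple (v, w⁺, w⁻, b, ξ) with Obj(v, w⁺, w⁻, b, ξ) ≤ UB and (∑ j, v̄ j) + (w⁺ j0) / (u j0) ≤ B satisfies w⁺ j0 ≤ (UB - z) / (1 - ∑ i, ᾱ i * y i * x i j0). -/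
open Finset

theorem stmt2
    (m n : ℕ) (x : Fin m → Fin n → ℝ) (y : Fin m → ℝ)
    (hy : ∀ i, y i = 1 ∨ y i = -1)
    (C : ℝ) (hC : 0 < C) (B : ℝ) (u l : Fin n → ℝ)
    (hu : ∀ j, 0 < u j) (hl : ∀ j, l j < 0)
    (vb wpb wmb : Fin n → ℝ) (bb : ℝ) (ξb : Fin m → ℝ)
    (hfeas : LPFeasible x y B u l vb wpb wmb bb ξb)
    (z : ℝ) (hz : z = Obj C vb wpb wmb bb ξb)
    (hopt : ∀ (v wp wm : Fin n → ℝ) (b : ℝ) (ξ : Fin m → ℝ),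
      LPFeasible x y B u l v wp wm b ξ → Obj C v wp wm b ξ ≥ z)
    (αb : Fin m → ℝ) (hα : ∀ i, 0 ≤ αb i)
    (hdual : ∀ (v wp wm : Fin n → ℝ) (b : ℝ) (ξ : Fin m → ℝ),
      RelaxedFeasible B u l v wp wm ξ → Lag x y C v wp wm b ξ αb ≥ z)
    (j0 : Fin n) (hj0 : wpb j0 + wmb j0 = 0)
    (hpos : 0 < 1 - ∑ i, αb i * y i * x i j0)
    (UB : ℝ) :
    ∀ (v wp wm : Fin n → ℝ) (b : ℝ) (ξ : Fin m → ℝ),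
      FSFeasible x y B u l v wp wm b ξ →
      Obj C v wp wm b ξ ≤ UB →
      (∑ j, vb j) + wp j0 / u j0 ≤ B →
      wp j0 ≤ (UB - z) / (1 - ∑ i, αb i * y i * x i j0) := by
  intro v wp wm b ξ hfs hub _hbud
  obtain ⟨h1, h2, h3, h4, h5⟩ := hfs
  set wp' : Fin n → ℝ := Function.update wp j0 0 with hwp'
  have hptw : ∀ j, wp j = wp' j + (if j = j0 then wp j0 else 0) := by
    intro j; by_cases hj : j = j0 <;> simp [hwp', Function.update_apply, hj]
  have hrel : RelaxedFeasible B u l v wp' wm ξ := by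
    refine ⟨h2, ?_, h4, ?_⟩
    · intro j
      obtain ⟨ha, hb', hc, hd⟩ := h3 j
      by_cases hj : j = j0
      · subst hj
        refine ⟨by simp [hwp'], ?_, hc, hd⟩
        simp only [hwp', Function.update_self]
        have hv : 0 ≤ v j := by rcases h5 j with h | h <;> simp [h]
        exact mul_nonneg (hu j).le hv
      · simp only [hwp', Function.update_apply, if_neg hj]
        exact ⟨ha, hb', hc, hd⟩
    · intro j; rcases h5 j with h | h <;> simp [h]
  have hlag' : Lag x y C v wp' wm b ξ αb ≥ z := hdual _ _ _ b _ hrel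
  have e1 : (∑ j, (wp j + wm j)) = (∑ j, (wp' j + wm j)) + wp j0 := by
    have : ∀ j ∈ Finset.univ, wp j + wm j
        = (wp' j + wm j) + (if j = j0 then wp j0 else 0) := by
      intro j _; rw [hptw j]; ring
    rw [Finset.sum_congr rfl this, Finset.sum_add_distrib, Finset.sum_ite_eq']
    simp
  have e2 : ∀ i, (∑ j, (wp j - wm j) * x i j)
      = (∑ j, (wp' j - wm j) * x i j) + wp j0 * x i j0 := by
    intro i
    have : ∀ j ∈ Finset.univ, (wp j - wm j) * x i j
        = (wp' j - wm j) * x i j + (if j = j0 then wp j0 * x i j0 else 0) := by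
      intro j _; rw [hptw j]; by_cases hj : j = j0 <;> simp [hj] <;> ring
    rw [Finset.sum_congr rfl this, Finset.sum_add_distrib, Finset.sum_ite_eq']
    simp
  have key : Lag x y C v wp wm b ξ αb
      = Lag x y C v wp' wm b ξ αb + wp j0 * (1 - ∑ i, αb i * y i * x i j0) := by
    simp only [Lag, Obj, e1]
    have : ∀ i ∈ Finset.univ,
        αb i * (1 - ξ i - y i * ((∑ j, (wp j - wm j) * x i j) + b))
        = αb i * (1 - ξ i - y i * ((∑ j, (wp' j - wm j) * x i j) + b))
          - wp j0 * (αb i * y i * x i j0) := by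
      intro i _; rw [e2 i]; ring
    rw [Finset.sum_congr rfl this, Finset.sum_sub_distrib, ← Finset.mul_sum]
    ring
  have hnp : (∑ i, αb i * (1 - ξ i - y i * ((∑ j, (wp j - wm j) * x i j) + b))) ≤ 0 :=
    Finset.sum_nonpos fun i _ =>
      mul_nonpos_of_nonneg_of_nonpos (hα i) (by linarith [h1 i])
  have hobj : Lag x y C v wp wm b ξ αb ≤ Obj C v wp wm b ξ := by
    simp only [Lag]; linarith
  have hfin : z + wp j0 * (1 - ∑ i, αb i * y i * x i j0) ≤ UB := by
    have := key; linarith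
  rw [le_div_iff₀ hpos]
  linarith
end

section
/- Let (v̄, w̄⁺, w̄⁻, b̄, ξ̄) be LP-feasible with objective value z = Obj(v̄, w̄⁺, w̄⁻, b̄, ξ̄), and suppose every LP-feasible tuple has objective value at least z. Let ᾱ : Fin m → ℝ satisfy ᾱ i ≥ 0 for all i and L(t; ᾱ) ≥ z for every relaxed-feasible tuple t. Let j0 : Fin n with w̄⁺ j0 + w̄⁻ j0 = 0, and assume 1 + ∑ i, ᾱ i * y i * x i j0 > 0. Let UB : ℝ. Then every FS-SVM-feasible tuple (v, w⁺, w⁻, b, ξ) with Obj(v, w⁺, w⁻, b, ξ) ≤ UB and (∑ j, v̄ j) + (w⁻ j0) / (-(l j0)) ≤ B satisfies w⁻ j0 ≤ (UB - z) / (1 + ∑ i, ᾱ i * y i * x i j0). -/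
open Finset

theorem stmt3
    (m n : ℕ) (x : Fin m → Fin n → ℝ) (y : Fin m → ℝ)
    (hy : ∀ i, y i = 1 ∨ y i = -1)
    (C : ℝ) (hC : 0 < C) (B : ℝ) (u l : Fin n → ℝ)
    (hu : ∀ j, 0 < u j) (hl : ∀ j, l j < 0)
    (vb wpb wmb : Fin n → ℝ) (bb : ℝ) (ξb : Fin m → ℝ)
    (hfeas : LPFeasible x y B u l vb wpb wmb bb ξb)
    (z : ℝ) (hz : z = Obj C vb wpb wmb bb ξb)
    (hopt : ∀ (v wp wm : Fin n → ℝ) (b : ℝ) (ξ : Fin m → ℝ),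
      LPFeasible x y B u l v wp wm b ξ → Obj C v wp wm b ξ ≥ z)
    (αb : Fin m → ℝ) (hα : ∀ i, 0 ≤ αb i)
    (hdual : ∀ (v wp wm : Fin n → ℝ) (b : ℝ) (ξ : Fin m → ℝ),
      RelaxedFeasible B u l v wp wm ξ → Lag x y C v wp wm b ξ αb ≥ z)
    (j0 : Fin n) (hj0 : wpb j0 + wmb j0 = 0)
    (hpos : 0 < 1 + ∑ i, αb i * y i * x i j0)
    (UB : ℝ) :
    ∀ (v wp wm : Fin n → ℝ) (b : ℝ) (ξ : Fin m → ℝ),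
      FSFeasible x y B u l v wp wm b ξ →
      Obj C v wp wm b ξ ≤ UB →
      (∑ j, vb j) + wm j0 / (-(l j0)) ≤ B →
      wm j0 ≤ (UB - z) / (1 + ∑ i, αb i * y i * x i j0) := by

  intro v wp wm b ξ hfs hObj _hB
  obtain ⟨h1, h2, h3, h4, h5⟩ := hfs
  set wm' := Function.update wm j0 0 with hwm'
  have hv0 : ∀ j, 0 ≤ v j := by
    intro j; rcases h5 j with h | h <;> simp [h]
  have hrel : RelaxedFeasible B u l v wp wm' ξ := by
    refine ⟨h2, fun j => ?_, h4, fun j => ?_⟩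
    · obtain ⟨a, a', c, d⟩ := h3 j
      by_cases hj : j = j0
      · subst hj
        simp only [hwm', Function.update_self]
        exact ⟨a, a', le_refl 0, mul_nonneg (by linarith [hl j]) (hv0 j)⟩
      · simp only [hwm', Function.update_of_ne hj]
        exact ⟨a, a', c, d⟩
    · rcases h5 j with h | h <;> simp [h]
  have hlag := hdual v wp wm' b ξ hrel
  have hsum1 : ∑ j, (wp j + wm' j) = (∑ j, (wp j + wm j)) - wm j0 := by
    have : ∀ j ∈ Finset.univ, wp j + wm' j
        = (wp j + wm j) - (if j = j0 then wm j0 else 0) := by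
      intro j _
      by_cases hj : j = j0
      · subst hj; simp [hwm']
      · simp [hwm', Function.update_of_ne hj, hj]
    rw [Finset.sum_congr rfl this, Finset.sum_sub_distrib, Finset.sum_ite_eq' Finset.univ j0]
    simp
  have hsum2 : ∀ i, ∑ j, (wp j - wm' j) * x i j
      = (∑ j, (wp j - wm j) * x i j) + wm j0 * x i j0 := by
    intro i
    have : ∀ j ∈ Finset.univ, (wp j - wm' j) * x i j
        = (wp j - wm j) * x i j + (if j = j0 then wm j0 * x i j0 else 0) := by
      intro j _
      by_cases hj : j = j0
      · subst hj; simp [hwm']; ring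
      · simp [hwm', Function.update_of_ne hj, hj]
    rw [Finset.sum_congr rfl this, Finset.sum_add_distrib, Finset.sum_ite_eq' Finset.univ j0]
    simp
  have hLagEq : Lag x y C v wp wm' b ξ αb
      = Lag x y C v wp wm b ξ αb - (1 + ∑ i, αb i * y i * x i j0) * wm j0 := by
    unfold Lag Obj
    rw [hsum1]
    have : ∀ i ∈ Finset.univ, αb i * (1 - ξ i - y i * ((∑ j, (wp j - wm' j) * x i j) + b))
        = αb i * (1 - ξ i - y i * ((∑ j, (wp j - wm j) * x i j) + b))
          - (αb i * y i * x i j0) * wm j0 := by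
      intro i _
      rw [hsum2 i]; ring
    rw [Finset.sum_congr rfl this, Finset.sum_sub_distrib, ← Finset.sum_mul]
    ring
  have hLagLe : Lag x y C v wp wm b ξ αb ≤ Obj C v wp wm b ξ := by
    unfold Lag
    have : ∑ i, αb i * (1 - ξ i - y i * ((∑ j, (wp j - wm j) * x i j) + b)) ≤ 0 := by
      apply Finset.sum_nonpos
      intro i _
      apply mul_nonpos_of_nonneg_of_nonpos (hα i)
      have := h1 i
      linarith
    linarith
  rw [le_div_iff₀ hpos]
  have := hLagEq ▸ hlag
  linarith
end

section
/- Let ᾱ : Fin m → ℝ satisfy ᾱ i ≥ 0 for all i, let z : ℝ, and suppose L(t; ᾱ) ≥ z for every relaxed-feasible tuple t. Let j0 : Fin n and w̃ ≥ 0. Then every relaxed-feasible tuple (v, w⁺, w⁻, b, ξ) with w⁺ j0 = w̃ satisfies L(v, w⁺, w⁻, b, ξ; ᾱ) ≥ z + w̃ * (1 - ∑ i, ᾱ i * y i * x i j0). -/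
open Finset

theorem stmt4
    (m n : ℕ) (x : Fin m → Fin n → ℝ) (y : Fin m → ℝ)
    (hy : ∀ i, y i = 1 ∨ y i = -1)
    (C : ℝ) (hC : 0 < C) (B : ℝ) (u l : Fin n → ℝ)
    (hu : ∀ j, 0 < u j) (hl : ∀ j, l j < 0)
    (αb : Fin m → ℝ) (hα : ∀ i, 0 ≤ αb i) (z : ℝ)
    (hdual : ∀ (v wp wm : Fin n → ℝ) (b : ℝ) (ξ : Fin m → ℝ),
      RelaxedFeasible B u l v wp wm ξ → Lag x y C v wp wm b ξ αb ≥ z)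
    (j0 : Fin n) (wt : ℝ) (hwt : 0 ≤ wt) :
    ∀ (v wp wm : Fin n → ℝ) (b : ℝ) (ξ : Fin m → ℝ),
      RelaxedFeasible B u l v wp wm ξ → wp j0 = wt →
      Lag x y C v wp wm b ξ αb ≥ z + wt * (1 - ∑ i, αb i * y i * x i j0) := by
  intro v wp wm b ξ hfeas hj0
  obtain ⟨h1, h2, h3, h4⟩ := hfeas
  set wp' : Fin n → ℝ := Function.update wp j0 0 with hwp'
  have hfeas' : RelaxedFeasible B u l v wp' wm ξ := by
    refine ⟨h1, ?_, h3, h4⟩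
    intro j
    by_cases hjj : j = j0
    · subst hjj
      simp only [hwp', Function.update_self]
      exact ⟨le_refl 0, mul_nonneg (hu j).le (h4 j).1, (h2 j).2.2.1, (h2 j).2.2.2⟩
    · simp only [hwp', Function.update_of_ne hjj]
      exact h2 j
  have hne : ∀ j ∈ Finset.univ.erase j0, wp' j = wp j := by
    intro j hj
    simp only [hwp', Function.update_of_ne (Finset.ne_of_mem_erase hj)]
  have hsum1 : ∑ j, (wp j + wm j) = (∑ j, (wp' j + wm j)) + wt := by
    have he : ∑ j ∈ Finset.univ.erase j0, (wp' j + wm j)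
        = ∑ j ∈ Finset.univ.erase j0, (wp j + wm j) :=
      Finset.sum_congr rfl (fun j hj => by rw [hne j hj])
    rw [← Finset.add_sum_erase _ (fun j => wp j + wm j) (Finset.mem_univ j0),
        ← Finset.add_sum_erase _ (fun j => wp' j + wm j) (Finset.mem_univ j0), he]
    simp only [hwp', Function.update_self, hj0]
    ring
  have hsum2 : ∀ i, ∑ j, (wp j - wm j) * x i j
      = (∑ j, (wp' j - wm j) * x i j) + wt * x i j0 := by
    intro i
    have he : ∑ j ∈ Finset.univ.erase j0, (wp' j - wm j) * x i j
        = ∑ j ∈ Finset.univ.erase j0, (wp j - wm j) * x i j :=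
      Finset.sum_congr rfl (fun j hj => by rw [hne j hj])
    rw [← Finset.add_sum_erase _ (fun j => (wp j - wm j) * x i j) (Finset.mem_univ j0),
        ← Finset.add_sum_erase _ (fun j => (wp' j - wm j) * x i j) (Finset.mem_univ j0), he]
    simp only [hwp', Function.update_self, hj0]
    ring
  have hkey : Lag x y C v wp wm b ξ αb
      = Lag x y C v wp' wm b ξ αb + wt * (1 - ∑ i, αb i * y i * x i j0) := by
    simp only [Lag, Obj, hsum1, hsum2]
    have hsplit : ∑ i, αb i * (1 - ξ i - y i * ((∑ j, (wp' j - wm j) * x i j) + wt * x i j0 + b))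
        = (∑ i, αb i * (1 - ξ i - y i * ((∑ j, (wp' j - wm j) * x i j) + b)))
          - wt * ∑ i, αb i * y i * x i j0 := by
      rw [Finset.mul_sum, ← Finset.sum_sub_distrib]
      exact Finset.sum_congr rfl (fun i _ => by ring)
    rw [hsplit]
    ring
  rw [hkey]
  have := hdual v wp' wm b ξ hfeas'
  linarith
end

section
/- Let (v, w⁺, w⁻, b, ξ) be FS-SVM-feasible and optimal, i.e., Obj(v, w⁺, w⁻, b, ξ) ≤ Obj(v', w'⁺, w'⁻, b', ξ') for every FS-SVM-feasible tuple (v', w'⁺, w'⁻, b', ξ'). Then for every j : Fin n, at most one of w⁺ j and w⁻ j is nonzero, i.e., w⁺ j * w⁻ j = 0. -/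
open Finset

theorem stmt5
    (m n : ℕ) (x : Fin m → Fin n → ℝ) (y : Fin m → ℝ)
    (hy : ∀ i, y i = 1 ∨ y i = -1)
    (C : ℝ) (hC : 0 < C) (B : ℝ) (u l : Fin n → ℝ)
    (hu : ∀ j, 0 < u j) (hl : ∀ j, l j < 0)
    (v wp wm : Fin n → ℝ) (b : ℝ) (ξ : Fin m → ℝ)
    (hfeas : FSFeasible x y B u l v wp wm b ξ)
    (hopt : ∀ (v' wp' wm' : Fin n → ℝ) (b' : ℝ) (ξ' : Fin m → ℝ),
      FSFeasible x y B u l v' wp' wm' b' ξ' →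
      Obj C v wp wm b ξ ≤ Obj C v' wp' wm' b' ξ') :
    ∀ j, wp j * wm j = 0 := by
  intro j0
  by_contra h
  obtain ⟨h1, h2, h3, h4, h5⟩ := hfeas
  have hp : 0 < wp j0 := lt_of_le_of_ne (h3 j0).1 (fun e => h (by rw [← e]; ring))
  have hm : 0 < wm j0 := lt_of_le_of_ne (h3 j0).2.2.1
    (fun e => h (by rw [← e]; ring))
  set δ := min (wp j0) (wm j0) with hδdef
  have hδ : 0 < δ := lt_min hp hm
  have hδp : δ ≤ wp j0 := min_le_left _ _
  have hδm : δ ≤ wm j0 := min_le_right _ _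
  set wp' := Function.update wp j0 (wp j0 - δ) with hwp'
  set wm' := Function.update wm j0 (wm j0 - δ) with hwm'
  have hdiff : ∀ j, wp' j - wm' j = wp j - wm j := by
    intro j
    by_cases hj : j = j0
    · subst hj; simp [hwp', hwm']
    · simp [hwp', hwm', Function.update_of_ne hj]
  have hfeas' : FSFeasible x y B u l v wp' wm' b ξ := by
    refine ⟨fun i => ?_, h2, fun j => ?_, h4, h5⟩
    · have := h1 i
      simpa only [hdiff] using this
    · by_cases hj : j = j0
      · subst hj
        simp only [hwp', hwm', Function.update_self]
        exact ⟨by linarith, by linarith [(h3 j).2.1], by linarith,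
          by linarith [(h3 j).2.2.2]⟩
      · simp only [hwp', hwm', Function.update_of_ne hj]
        exact h3 j
  have hsum : ∑ j, (wp' j + wm' j) = (∑ j, (wp j + wm j)) - 2 * δ := by
    have : ∀ j, wp' j + wm' j = (wp j + wm j) - (if j = j0 then 2 * δ else 0) := by
      intro j
      by_cases hj : j = j0
      · subst hj; simp [hwp', hwm']; ring
      · simp [hwp', hwm', Function.update_of_ne hj, hj]
    rw [Finset.sum_congr rfl (fun j _ => this j), Finset.sum_sub_distrib,
      Finset.sum_ite_eq' _ j0]
    simp
  have hobj := hopt v wp' wm' b ξ hfeas'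
  simp only [Obj, hsum] at hobj
  linarith
end

section
/- For every FS-SVM-feasible tuple (v, w⁺, w⁻, b, ξ), the number of nonzero hyperplane coefficients is bounded by the budget: the cardinality of the finite set {j : Fin n | w⁺ j - w⁻ j ≠ 0}, viewed as a real number, is at most B. -/
open Finset

open scoped Classical in
theorem stmt6
    (m n : ℕ) (x : Fin m → Fin n → ℝ) (y : Fin m → ℝ)
    (hy : ∀ i, y i = 1 ∨ y i = -1)
    (C : ℝ) (hC : 0 < C) (B : ℝ) (u l : Fin n → ℝ)
    (hu : ∀ j, 0 < u j) (hl : ∀ j, l j < 0)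
    (v wp wm : Fin n → ℝ) (b : ℝ) (ξ : Fin m → ℝ)
    (hfeas : FSFeasible x y B u l v wp wm b ξ) :
    ((Finset.univ.filter fun j => wp j - wm j ≠ 0).card : ℝ) ≤ B := by
  obtain ⟨-, hB, hbox, -, hbin⟩ := hfeas
  have key : ∀ j ∈ Finset.univ.filter fun j => wp j - wm j ≠ 0, (1:ℝ) ≤ v j := by
    intro j hj
    rw [Finset.mem_filter] at hj
    rcases hbin j with h0 | h1
    · exfalso
      obtain ⟨h1, h2, h3, h4⟩ := hbox j
      rw [h0, mul_zero] at h2 h4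
      apply hj.2
      have : wp j = 0 := le_antisymm h2 h1
      have : wm j = 0 := le_antisymm h4 h3
      simp_all
    · rw [h1]
  calc ((Finset.univ.filter fun j => wp j - wm j ≠ 0).card : ℝ)
      = ∑ _j ∈ Finset.univ.filter fun j => wp j - wm j ≠ 0, (1:ℝ) := by simp
    _ ≤ ∑ j ∈ Finset.univ.filter fun j => wp j - wm j ≠ 0, v j :=
        Finset.sum_le_sum key
    _ ≤ ∑ j, v j := Finset.sum_le_sum_of_subset_of_nonneg (Finset.filter_subset _ _)
        (fun j _ _ => by rcases hbin j with h | h <;> simp [h])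
    _ ≤ B := hB
end
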